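/- Let (X, d) be a metric space and F ⊆ X. If there exists a finite nonzero Borel measure μ supported on F such that the s-energy ∫_F ∫_F d(x,y)^{−s} dμ(x) dμ(y) is finite for some s ≥ 0, then the Hausdorff dimension of F is at least s. -/

import Mathlib

open MeasureTheory Metric Set Filter
open scoped ENNReal NNReal Topology

/-- Potential-theoretic (energy) method: if a metric space subset `F` carries a finite
nonzero Borel measure `μ` supported on `F` whose `s`-energy
`∫_F ∫_F d(x,y)^{−s} dμ dμ` is finite for some `s ≥ 0`, then `dim_H F ≥ s`. -/
theorem stmt5 {X : Type*} [MetricSpace X] [MeasurableSpace X] [BorelSpace X]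
    (F : Set X) (μ : Measure X) [IsFiniteMeasure μ] (hμ : μ ≠ 0)
    (hsupp : μ Fᶜ = 0) (s : ℝ) (hs : 0 ≤ s)
    (henergy : (∫⁻ x in F, ∫⁻ y in F, edist x y ^ (-s) ∂μ ∂μ) < ∞) :
    ENNReal.ofReal s ≤ dimH F := by
  rcases eq_or_lt_of_le hs with rfl | hs0
  · simp
  have hF : ∀ᵐ x ∂μ, x ∈ F := by
    rw [Filter.Eventually, mem_ae_iff]
    simpa using hsupp
  have hrestr : μ.restrict F = μ := Measure.restrict_eq_self_of_ae_mem hF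
  set g : X → X → ℝ≥0∞ := fun x y => edist x y ^ (-s) with hg
  have hgm : ∀ x, Measurable (g x) := fun x =>
    (ENNReal.continuous_rpow_const.comp (continuous_const.edist continuous_id)).measurable
  have hgc1 : ∀ y, Continuous fun x => g x y := fun y =>
    ENNReal.continuous_rpow_const.comp (continuous_id.edist continuous_const)
  have hφm : Measurable fun x => ∫⁻ y, g x y ∂μ := by
    apply measurable_of_Iic
    intro c
    refine IsClosed.measurableSet (IsSeqClosed.isClosed ?_)
    intro u x hu hux
    simp only [Set.mem_preimage, Set.mem_Iic] at hu ⊢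
    calc (∫⁻ y, g x y ∂μ)
        ≤ ∫⁻ y, Filter.liminf (fun k => g (u k) y) Filter.atTop ∂μ := by
          refine lintegral_mono fun y => ?_
          have ht : Tendsto (fun k => g (u k) y) atTop (𝓝 (g x y)) :=
            ((hgc1 y).continuousAt.tendsto).comp hux
          rw [ht.liminf_eq]
      _ ≤ Filter.liminf (fun k => ∫⁻ y, g (u k) y ∂μ) Filter.atTop :=
          lintegral_liminf_le fun k => hgm (u k)
      _ ≤ c := by
          refine le_trans (liminf_le_liminf (Eventually.of_forall hu)) ?_
          simp [liminf_const]
  have henergy' : (∫⁻ x, ∫⁻ y, g x y ∂μ ∂μ) ≠ ∞ := by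
    rw [← hrestr]
    exact henergy.ne
  have hae : ∀ᵐ x ∂μ, (∫⁻ y, g x y ∂μ) < ∞ := ae_lt_top hφm henergy'
  -- the good sets
  set E : ℕ → Set X := fun n =>
    F ∩ {x | ∀ r : ℝ, 0 < r → r ≤ 1 / (n + 1) → μ (ball x r) ≤ ENNReal.ofReal r ^ s} with hE
  -- a.e. point lies in some `E n`
  have hcover : ∀ᵐ x ∂μ, x ∈ ⋃ n, E n := by
    filter_upwards [hF, hae] with x hxF hx
    set ν := μ.withDensity (g x) with hν
    have hν_univ : ν univ = ∫⁻ y, g x y ∂μ := by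
      rw [hν, withDensity_apply _ MeasurableSet.univ, Measure.restrict_univ]
    have hν_fin : ν univ ≠ ∞ := by rw [hν_univ]; exact hx.ne
    have hνx : ν {x} = 0 := by
      have h1 : ν {x} = g x x * μ {x} := by
        rw [hν, withDensity_apply _ (measurableSet_singleton x), lintegral_singleton]
      have hgx : g x x = ∞ := by
        simp [hg, ENNReal.zero_rpow_of_neg (neg_lt_zero.2 hs0)]
      rcases eq_or_ne (μ {x}) 0 with h0 | h0
      · rw [h1, h0, mul_zero]
      · exfalso
        apply hν_fin
        refine top_le_iff.1 ?_
        calc (⊤ : ℝ≥0∞) = ν {x} := by rw [h1, hgx, ENNReal.top_mul h0]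
          _ ≤ ν univ := measure_mono (subset_univ _)
    have hiInter : ⋂ m : ℕ, ball x (1 / (m + 1 : ℝ)) = {x} := by
      ext y
      simp only [mem_iInter, mem_ball, mem_singleton_iff]
      constructor
      · intro h
        have hle : dist y x ≤ 0 := by
          by_contra hpos
          push_neg at hpos
          obtain ⟨m, hm⟩ := exists_nat_one_div_lt hpos
          exact absurd (h m) (not_lt.2 hm.le)
        rw [dist_le_zero] at hle
        exact hle
      · rintro rfl
        intro m
        simp only [dist_self]
        positivity
    have htend : Tendsto (fun m : ℕ => ν (ball x (1 / (m + 1 : ℝ)))) atTop (𝓝 0) := by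
      rw [← hνx, ← hiInter]
      apply tendsto_measure_iInter_atTop
        (fun m => measurableSet_ball.nullMeasurableSet) ?_ ⟨0, ?_⟩
      · intro a b hab
        apply ball_subset_ball
        have hab' : (a : ℝ) ≤ b := by exact_mod_cast hab
        gcongr
      · exact ((measure_mono (subset_univ _)).trans_lt hν_fin.lt_top).ne
    have hev : ∃ n : ℕ, ν (ball x (1 / (n + 1 : ℝ))) ≤ 1 :=
      ((htend.eventually_lt_const (by norm_num : (0:ℝ≥0∞) < 1)).exists).imp
        fun n h => h.le
    obtain ⟨n, hn⟩ := hev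
    refine mem_iUnion.2 ⟨n, hxF, fun r hr hrle => ?_⟩
    have key : μ (ball x r) * ENNReal.ofReal r ^ (-s) ≤ 1 := by
      calc μ (ball x r) * ENNReal.ofReal r ^ (-s)
          = ∫⁻ _ in ball x r, ENNReal.ofReal r ^ (-s) ∂μ := by
            rw [setLIntegral_const, mul_comm]
        _ ≤ ∫⁻ y in ball x r, g x y ∂μ := by
            refine setLIntegral_mono (hgm x) fun y hy => ?_
            have h1 : edist x y ≤ ENNReal.ofReal r := by
              rw [edist_dist]
              exact ENNReal.ofReal_le_ofReal (le_of_lt (by rw [dist_comm]; exact hy))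
            calc ENNReal.ofReal r ^ (-s) = (ENNReal.ofReal r ^ s)⁻¹ :=
                  ENNReal.rpow_neg _ _
              _ ≤ (edist x y ^ s)⁻¹ :=
                  ENNReal.inv_le_inv.2 (ENNReal.rpow_le_rpow h1 hs)
              _ = edist x y ^ (-s) := (ENNReal.rpow_neg _ _).symm
              _ = g x y := rfl
        _ = ν (ball x r) := (withDensity_apply _ measurableSet_ball).symm
        _ ≤ ν (ball x (1 / (n + 1 : ℝ))) := measure_mono (ball_subset_ball hrle)
        _ ≤ 1 := hn
    have := ENNReal.le_inv_iff_mul_le.2 key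
    rwa [ENNReal.rpow_neg, inv_inv] at this
  -- some `E n` has positive measure
  have hμF : μ univ ≠ 0 := by
    simpa [Measure.measure_univ_eq_zero] using hμ
  have hUnion : μ (⋃ n, E n) ≠ 0 := by
    intro h0
    apply hμF
    have hcompl : μ (⋃ n, E n)ᶜ = 0 := by
      rw [Filter.Eventually, mem_ae_iff] at hcover
      exact hcover
    refine le_antisymm ?_ zero_le
    calc μ univ = μ ((⋃ n, E n) ∪ (⋃ n, E n)ᶜ) := by rw [union_compl_self]
      _ ≤ μ (⋃ n, E n) + μ (⋃ n, E n)ᶜ := measure_union_le _ _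
      _ = 0 := by rw [h0, hcompl, add_zero]
  obtain ⟨n, hn⟩ : ∃ n, μ (E n) ≠ 0 := by
    by_contra h
    push_neg at h
    exact hUnion (measure_iUnion_null h)
  -- mass distribution principle: `μH[s] (E n) > 0`
  set C : ℝ≥0∞ := 2 ^ s with hC
  have hC0 : C ≠ 0 := by
    simp [hC, ENNReal.rpow_eq_zero_iff]
  have hCt : C ≠ ∞ := by
    simp [hC, ENNReal.rpow_eq_top_iff, hs0, not_lt.2 hs]
  have hH : μ (E n) / C ≤ μH[s] (E n) := by
    rw [MeasureTheory.Measure.hausdorffMeasure_apply]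
    refine le_iSup₂_of_le (ENNReal.ofReal (1 / (2 * (n + 1)))) (by
      rw [ENNReal.ofReal_pos]; positivity) ?_
    refine le_iInf fun t => le_iInf fun hcov => le_iInf fun hdiam => ?_
    rw [ENNReal.div_le_iff hC0 hCt]
    have hterm : ∀ k, μ (E n ∩ t k) ≤
        (⨆ _ : (t k).Nonempty, EMetric.diam (t k) ^ s) * C := by
      intro k
      rcases (E n ∩ t k).eq_empty_or_nonempty with hek | ⟨x, hxE, hxt⟩
      · simp [hek]
      have hne : (t k).Nonempty := ⟨x, hxt⟩
      rw [iSup_pos hne]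
      set D := EMetric.diam (t k) with hD
      have hDle : D ≤ ENNReal.ofReal (1 / (2 * (n + 1))) := hdiam k
      have hDtop : D ≠ ∞ := (hDle.trans_lt ENNReal.ofReal_lt_top).ne
      rcases eq_or_ne D 0 with hD0 | hD0
      · -- `t k` is a subsingleton contained in `{x}` and `μ {x} = 0`
        have hsub : t k ⊆ {x} := by
          intro y hy
          have := EMetric.edist_le_diam_of_mem hy hxt
          change edist y x ≤ D at this
          rw [hD0] at this
          simpa [edist_eq_zero] using le_antisymm this zero_le
        have hx0 : μ {x} = 0 := by
          have hbound : ∀ m : ℕ,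
              μ {x} ≤ ENNReal.ofReal (1 / (n + 1) / (m + 1)) ^ s := by
            intro m
            refine le_trans (measure_mono ?_) (hxE.2 (1 / (n + 1) / (m + 1))
              (by positivity) ?_)
            · intro y hy
              rw [mem_singleton_iff] at hy
              subst hy
              simp only [mem_ball, dist_self]
              positivity
            · rw [div_le_iff₀ (by positivity : (0:ℝ) < m + 1)]
              nlinarith [one_div_pos.2 (by positivity : (0:ℝ) < (n:ℝ) + 1)]
          have h1 : Tendsto (fun m : ℕ => ENNReal.ofReal (1 / (n + 1) / (m + 1)))
              atTop (𝓝 0) := by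
            rw [show (0:ℝ≥0∞) = ENNReal.ofReal 0 by simp]
            apply ENNReal.tendsto_ofReal
            have := tendsto_one_div_add_atTop_nhds_zero_nat (𝕜 := ℝ)
            have h2 := this.const_mul (1 / ((n:ℝ) + 1))
            simpa [div_eq_mul_inv, mul_comm] using h2
          have h3 : Tendsto (fun m : ℕ =>
              ENNReal.ofReal (1 / (n + 1) / (m + 1)) ^ s) atTop (𝓝 0) := by
            have h4 := ((ENNReal.continuous_rpow_const (y := s)).tendsto 0).comp h1
            simpa [Function.comp_def, ENNReal.zero_rpow_of_pos hs0] using h4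
          exact le_antisymm (ge_of_tendsto h3 (Eventually.of_forall hbound)) zero_le
        calc μ (E n ∩ t k) ≤ μ {x} := measure_mono (inter_subset_right.trans hsub)
          _ = 0 := hx0
          _ ≤ _ := zero_le
      · set d := D.toReal with hd
        have hd0 : 0 < d := ENNReal.toReal_pos hD0 hDtop
        have hdle : d ≤ 1 / (2 * (n + 1)) := by
          rw [hd]
          calc D.toReal ≤ (ENNReal.ofReal (1 / (2 * (n + 1)))).toReal :=
                ENNReal.toReal_mono ENNReal.ofReal_ne_top hDle
            _ = 1 / (2 * ((n:ℝ) + 1)) := ENNReal.toReal_ofReal (by positivity)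
        have hsub : E n ∩ t k ⊆ ball x (2 * d) := by
          intro y hy
          have hyd : edist y x ≤ D := EMetric.edist_le_diam_of_mem hy.2 hxt
          rw [mem_ball]
          calc dist y x = (edist y x).toReal := by rw [edist_dist,
              ENNReal.toReal_ofReal dist_nonneg]
            _ ≤ D.toReal := ENNReal.toReal_mono hDtop hyd
            _ = d := rfl
            _ < 2 * d := by linarith
        have h2d : 2 * d ≤ 1 / ((n:ℝ) + 1) := by
          rw [le_div_iff₀ (by positivity : (0:ℝ) < (n:ℝ) + 1)]
          rw [le_div_iff₀ (by positivity : (0:ℝ) < 2 * ((n:ℝ) + 1))] at hdle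
          linarith
        calc μ (E n ∩ t k) ≤ μ (ball x (2 * d)) := measure_mono hsub
          _ ≤ ENNReal.ofReal (2 * d) ^ s := hxE.2 _ (by positivity) h2d
          _ = D ^ s * C := by
            rw [ENNReal.ofReal_mul (by norm_num : (0:ℝ) ≤ 2),
              ENNReal.mul_rpow_of_nonneg _ _ hs, hd, ENNReal.ofReal_toReal hDtop,
              mul_comm, hC]
            norm_num
    calc μ (E n) ≤ μ (⋃ k, E n ∩ t k) := by
          refine measure_mono fun y hy => ?_
          obtain ⟨k, hk⟩ := mem_iUnion.1 (hcov hy)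
          exact mem_iUnion.2 ⟨k, hy, hk⟩
      _ ≤ ∑' k, μ (E n ∩ t k) := measure_iUnion_le _
      _ ≤ ∑' k, (⨆ _ : (t k).Nonempty, EMetric.diam (t k) ^ s) * C :=
          ENNReal.tsum_le_tsum hterm
      _ = (∑' k, ⨆ _ : (t k).Nonempty, EMetric.diam (t k) ^ s) * C :=
          ENNReal.tsum_mul_right
  -- conclude
  have hne0 : μH[s] F ≠ 0 := by
    intro h0
    have h1 : μH[s] (E n) = 0 :=
      le_antisymm (h0 ▸ measure_mono inter_subset_left) zero_le
    rw [h1] at hH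
    exact (ENNReal.div_pos hn hCt).ne' (le_antisymm hH zero_le)
  have hfinal : ((s.toNNReal : ℝ≥0) : ℝ≥0∞) ≤ dimH F := by
    refine le_dimH_of_hausdorffMeasure_ne_zero (d := s.toNNReal) ?_
    rwa [Real.coe_toNNReal _ hs]
  simpa [ENNReal.ofReal] using hfinal
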